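/- Geometric disjointness in the tree selection: let i < j be indices in {1,2,3} and let 𝐓 be a collection of i-trees with tops, selected so that: (a) the trees were selected greedily with tops P_T maximal in the tile order in coordinate i and with frequency center ξ_{P_{T,i}} maximal among available tops at the time of selection, and (b) whenever a tree T with top P^0 is selected, all quartiles P with P_j < P^0_j are also removed from the remaining collection. Then the tiles {P_j : P ∈ T for some T ∈ 𝐓} are pairwise disjoint. -/
import Mathlib


open MeasureTheory Set

/-- The Walsh functions `w_l : ℝ → ℝ`, defined recursively by
`w_0 = χ_{[0,1)}`, `w_{2l}(x) = w_l(2x) + w_l(2x−1)`,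
`w_{2l+1}(x) = w_l(2x) − w_l(2x−1)`. -/
noncomputable def walsh : ℕ → ℝ → ℝ
  | 0, x => if x ∈ Set.Ico (0:ℝ) 1 then 1 else 0
  | (n+1), x =>
      if (n+1) % 2 = 0 then walsh ((n+1)/2) (2*x) + walsh ((n+1)/2) (2*x - 1)
      else walsh ((n+1)/2) (2*x) - walsh ((n+1)/2) (2*x - 1)
  decreasing_by all_goals exact Nat.div_lt_self (Nat.succ_pos n) one_lt_two

/-- A tile `[2^{-k}n, 2^{-k}(n+1)) × [2^k l, 2^k(l+1))`:
a half-open dyadic rectangle of area one. -/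
structure Tile where
  k : ℤ
  n : ℤ
  l : ℤ
deriving DecidableEq

namespace Tile

/-- The time interval `I_P = [2^{-k}n, 2^{-k}(n+1))` of a tile. -/
noncomputable def I (p : Tile) : Set ℝ := Set.Ico ((2:ℝ)^(-p.k) * p.n) ((2:ℝ)^(-p.k) * (p.n+1))

/-- The frequency interval `ω_P = [2^k l, 2^k(l+1))` of a tile. -/
noncomputable def freq (p : Tile) : Set ℝ := Set.Ico ((2:ℝ)^(p.k) * p.l) ((2:ℝ)^(p.k) * (p.l+1))

/-- The tile as a subset `I_P × ω_P` of the time-frequency plane. -/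
noncomputable def area (p : Tile) : Set (ℝ × ℝ) := p.I ×ˢ p.freq

/-- The length `|I_P| = 2^{-k}` of the time interval of a tile. -/
noncomputable def len (p : Tile) : ℝ := (2:ℝ)^(-p.k)

/-- The center `ξ_P` of the frequency interval of a tile. -/
noncomputable def ξ (p : Tile) : ℝ := (2:ℝ)^(p.k) * ((p.l : ℝ) + 1/2)

/-- The tile order: `p < q` iff `I_p ⊊ I_q` and `ω_q ⊆ ω_p`. -/
def lt (p q : Tile) : Prop := p.I ⊂ q.I ∧ q.freq ⊆ p.freq

/-- `p ≤ q` iff `p < q` or `p = q`. -/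
def le (p q : Tile) : Prop := Tile.lt p q ∨ p = q

/-- The Walsh wave packet `φ_P(x) = 2^{k/2} w_l(2^k x − n)` of a tile. -/
noncomputable def wp (p : Tile) : ℝ → ℝ :=
  fun x => Real.sqrt ((2:ℝ)^(p.k)) * walsh p.l.toNat ((2:ℝ)^(p.k) * x - p.n)

end Tile

/-- A quartile `[2^{-k}n, 2^{-k}(n+1)) × [2^{k+2}l, 2^{k+2}(l+1))`:
a dyadic rectangle of area four. -/
structure Quartile where
  k : ℤ
  n : ℤ
  l : ℤ
deriving DecidableEq

namespace Quartile

/-- The time interval `I_P` of a quartile. -/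
noncomputable def I (P : Quartile) : Set ℝ := Set.Ico ((2:ℝ)^(-P.k) * P.n) ((2:ℝ)^(-P.k) * (P.n+1))

/-- The length `|I_P| = 2^{-k}` of the time interval of a quartile. -/
noncomputable def len (P : Quartile) : ℝ := (2:ℝ)^(-P.k)

/-- The `j`-th sub-tile `P_j = I_P × [2^k(4l+j−1), 2^k(4l+j))` of a quartile,
for `j = 1, 2, 3`. -/
def tile (P : Quartile) (j : ℕ) : Tile := ⟨P.k, P.n, 4*P.l + ((j - 1 : ℕ) : ℤ)⟩

end Quartile

/-- `T` is an `i`-tree with top `top`: `P_i ≤ top_i` for all `P ∈ T`. -/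
def IsTree (i : ℕ) (top : Quartile) (T : Finset Quartile) : Prop :=
  ∀ P ∈ T, Tile.le (P.tile i) (top.tile i)

/-- `size_j((a_P)_{P∈Ps})`: the sup over trees `T ⊆ Ps` which are `i`-trees for
some `i ≠ j` of `(|I_T|⁻¹ Σ_{P∈T} |a_{P_j}|²)^{1/2}`. -/
noncomputable def size (Ps : Finset Quartile) (j : ℕ) (a : Quartile → ℂ) : ℝ :=
  sSup ((fun p : Quartile × Finset Quartile =>
      Real.sqrt ((∑ P ∈ p.2, ‖a P‖^2) / p.1.len)) ''
    {p | p.2 ⊆ Ps ∧ ∃ i ∈ ({1,2,3} : Set ℕ), i ≠ j ∧ IsTree i p.1 p.2})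

/-- `energy_j((a_P)_{P∈Ps})`: the sup over subsets `D ⊆ Ps` with
`{P_j : P ∈ D}` pairwise disjoint of `(Σ_{P∈D} |a_{P_j}|²)^{1/2}`. -/
noncomputable def energy (Ps : Finset Quartile) (j : ℕ) (a : Quartile → ℂ) : ℝ :=
  sSup ((fun D : Finset Quartile => Real.sqrt (∑ P ∈ D, ‖a P‖^2)) ''
    {D | D ⊆ Ps ∧ ∀ P ∈ D, ∀ P' ∈ D, P ≠ P' →
      Disjoint (P.tile j).area (P'.tile j).area})

/-- The `L^{1,∞}(I)` quasinorm `sup_{λ>0} λ |{x ∈ I : |g(x)| > λ}|`. -/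
noncomputable def weakL1 (g : ℝ → ℝ) (I : Set ℝ) : ℝ :=
  sSup {r | ∃ lam : ℝ, 0 < lam ∧ r = lam * (volume {x ∈ I | lam < |g x|}).toReal}

/-- The square function `(Σ_{P∈T} |a_{P_j}|² χ_{I_P}/|I_P|)^{1/2}` of a tree. -/
noncomputable def treeFn (T : Finset Quartile) (a : Quartile → ℂ) : ℝ → ℝ :=
  fun x => Real.sqrt (∑ P ∈ T, ‖a P‖^2 * (P.I.indicator (fun _ => (1:ℝ)) x) / P.len)

section Aux

/-- The dyadic interval `[2^k n, 2^k (n+1))`. -/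
noncomputable def Dy (k n : ℤ) : Set ℝ := Set.Ico ((2:ℝ)^k * n) ((2:ℝ)^k * (n+1))

lemma Dy_lt (k n : ℤ) : (2:ℝ)^k * n < (2:ℝ)^k * (n+1) := by
  have h : (0:ℝ) < (2:ℝ)^k := by positivity
  nlinarith

lemma Dy_subset {a b n m : ℤ} (hab : a ≤ b)
    (h : ((Dy a n) ∩ (Dy b m)).Nonempty) : Dy a n ⊆ Dy b m := by
  obtain ⟨x, ⟨h1, h2⟩, h3, h4⟩ := h
  have ha : (0:ℝ) < (2:ℝ)^a := by positivity
  set c : ℕ := (b - a).toNat with hc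
  have hb2 : (2:ℝ)^b = (2:ℝ)^a * (2:ℝ)^c := by
    rw [← zpow_natCast (2:ℝ) c, ← zpow_add₀ two_ne_zero]
    congr 1
    omega
  rw [hb2] at h3 h4
  have key1 : (2^c * m : ℤ) ≤ n := by
    have r : (2:ℝ)^a * ((2:ℝ)^c * m) < (2:ℝ)^a * ((n:ℝ) + 1) := by
      rw [← mul_assoc]; linarith
    have r2 : (2:ℝ)^c * m < (n:ℝ) + 1 := lt_of_mul_lt_mul_left r ha.le
    have : (2^c * m : ℤ) < n + 1 := by exact_mod_cast r2
    omega
  have key2 : n + 1 ≤ (2^c * (m+1) : ℤ) := by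
    have r : (2:ℝ)^a * (n:ℝ) < (2:ℝ)^a * ((2:ℝ)^c * ((m:ℝ)+1)) := by
      rw [← mul_assoc]; linarith
    have r2 : (n:ℝ) < (2:ℝ)^c * ((m:ℝ)+1) := lt_of_mul_lt_mul_left r ha.le
    have : (n : ℤ) < 2^c * (m+1) := by exact_mod_cast r2
    omega
  have c1 : (2:ℝ)^c * m ≤ (n:ℝ) := by exact_mod_cast key1
  have c2 : (n:ℝ) + 1 ≤ (2:ℝ)^c * ((m:ℝ)+1) := by exact_mod_cast key2
  intro z hz
  obtain ⟨hz1, hz2⟩ := hz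
  constructor
  · rw [hb2]
    calc (2:ℝ)^a * (2:ℝ)^c * m = (2:ℝ)^a * ((2:ℝ)^c * m) := by ring
      _ ≤ (2:ℝ)^a * n := mul_le_mul_of_nonneg_left c1 ha.le
      _ ≤ z := hz1
  · rw [hb2]
    calc z < (2:ℝ)^a * ((n:ℝ) + 1) := hz2
      _ ≤ (2:ℝ)^a * ((2:ℝ)^c * ((m:ℝ)+1)) := mul_le_mul_of_nonneg_left c2 ha.le
      _ = (2:ℝ)^a * (2:ℝ)^c * ((m:ℝ)+1) := by ring

lemma Dy_eq_k {a b n m : ℤ} (h : Dy a n = Dy b m) : a = b ∧ n = m := by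
  unfold Dy at h
  obtain ⟨h1, h2⟩ := (Set.Ico_eq_Ico_iff (Or.inl (Dy_lt a n))).mp h
  have ha : (0:ℝ) < (2:ℝ)^a := by positivity
  have hb : (0:ℝ) < (2:ℝ)^b := by positivity
  have hab : (2:ℝ)^a = (2:ℝ)^b := by nlinarith [h1, h2]
  have hk : a = b := zpow_right_injective₀ (by norm_num) (by norm_num) hab
  refine ⟨hk, ?_⟩
  have hnm : ((n:ℝ)) = m := by
    rw [hab] at h1
    exact mul_left_cancel₀ hb.ne' h1
  exact_mod_cast hnm

lemma Dy_ssubset {a b n m : ℤ} (hab : a < b)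
    (h : ((Dy a n) ∩ (Dy b m)).Nonempty) : Dy a n ⊂ Dy b m := by
  refine lt_of_le_of_ne (Dy_subset hab.le h) ?_
  intro he
  exact absurd (Dy_eq_k he).1 hab.ne

/-- sub-tile frequency interval sits inside the quartile frequency interval -/
lemma Dy_subtile {k l c : ℤ} (hc0 : 0 ≤ c) (hc3 : c ≤ 3) :
    Dy k (4*l + c) ⊆ Dy (k+2) l := by
  have hk : (0:ℝ) < (2:ℝ)^k := by positivity
  have h2 : (2:ℝ)^(k+2) = (2:ℝ)^k * 4 := by
    rw [zpow_add₀ (two_ne_zero)]; norm_num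
  intro z ⟨hz1, hz2⟩
  have hc0' : (0:ℝ) ≤ (c:ℝ) := by exact_mod_cast hc0
  have hc3' : (c:ℝ) ≤ 3 := by exact_mod_cast hc3
  constructor
  · rw [h2]; push_cast at hz1 ⊢; nlinarith
  · rw [h2]; push_cast at hz2 ⊢; nlinarith

namespace Tile

lemma I_eq_Dy (p : Tile) : p.I = Dy (-p.k) p.n := rfl
lemma freq_eq_Dy (p : Tile) : p.freq = Dy p.k p.l := rfl

lemma xi_mem_freq (p : Tile) : p.ξ ∈ p.freq := by
  have hk : (0:ℝ) < (2:ℝ)^p.k := by positivity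
  constructor
  · rw [ξ]; nlinarith
  · rw [ξ]; nlinarith

lemma le_I {p q : Tile} (h : Tile.le p q) : p.I ⊆ q.I := by
  rcases h with h | h
  · exact h.1.subset
  · rw [h]

lemma le_freq {p q : Tile} (h : Tile.le p q) : q.freq ⊆ p.freq := by
  rcases h with h | h
  · exact h.2
  · rw [h]

lemma le_k {p q : Tile} (h : Tile.le p q) : q.k ≤ p.k := by
  have hI : p.I ⊆ q.I := le_I h
  rw [I_eq_Dy, I_eq_Dy] at hI
  have hne : (Dy (-p.k) p.n).Nonempty := ⟨_, le_refl _, Dy_lt _ _⟩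
  obtain ⟨x, hx⟩ := hne
  have hx' := hI hx
  have h1 := hx.1
  have h2 := hx.2
  have h3 := hx'.1
  have h4 := hx'.2
  -- 2^{-q.k} q.n ≤ 2^{-p.k} p.n and 2^{-p.k}(p.n+1) ≤ 2^{-q.k}(q.n+1) would need full subset;
  -- instead use: length comparison via Dy_subset in reverse is overkill; derive directly:
  by_contra hcon
  push_neg at hcon
  -- p.k < q.k, so -q.k < -p.k, then Dy (-q.k) q.n ⊆ Dy (-p.k) p.n  (they intersect)
  have hsub : Dy (-q.k) q.n ⊆ Dy (-p.k) p.n :=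
    Dy_subset (by omega) ⟨x, hx', hx⟩
  have := Set.Subset.antisymm hI hsub
  have := (Dy_eq_k this).1
  omega

end Tile

end Aux

/-- Auxiliary: the asymmetric core of the disjointness argument,
assuming `P'.k < P.k` (i.e. `|I_P| < |I_{P'}|`). -/
lemma tree_selection_key (i j : ℕ)
    (hi1 : 1 ≤ i) (hj3 : j ≤ 3) (hij : i < j)
    (N : ℕ) (top : Fin N → Quartile) (T : Fin N → Finset Quartile)
    (heven : ∀ m, ∀ P ∈ T m, Even P.k)
    (htree : ∀ m, IsTree i (top m) (T m))
    (hgreedy : ∀ m m' : Fin N,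
      Tile.ξ ((top m').tile i) < Tile.ξ ((top m).tile i) → m ≤ m')
    (hremove : ∀ m m' : Fin N, m < m' → ∀ P' ∈ T m',
      ¬ Tile.lt (P'.tile j) ((top m).tile j))
    (m m' : Fin N) (P P' : Quartile) (hP : P ∈ T m) (hP' : P' ∈ T m')
    (hk : P'.k < P.k) (x y : ℝ)
    (hxP : x ∈ P.I) (hxP' : x ∈ P'.I)
    (hyP : y ∈ ((P.tile j).freq)) (hyP' : y ∈ ((P'.tile j).freq)) : False := by
  set ci : ℤ := ((i - 1 : ℕ) : ℤ) with hci
  set cj : ℤ := ((j - 1 : ℕ) : ℤ) with hcj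
  have hci0 : 0 ≤ ci := Int.natCast_nonneg _
  have hcj0 : 0 ≤ cj := Int.natCast_nonneg _
  have hci3 : ci ≤ 3 := by rw [hci]; omega
  have hcj3 : cj ≤ 3 := by rw [hcj]; omega
  have hcicj : ci + 1 ≤ cj := by rw [hci, hcj]; omega
  have hk2 : P'.k + 2 ≤ P.k := by
    obtain ⟨a, ha⟩ := heven m P hP
    obtain ⟨b, hb⟩ := heven m' P' hP'
    omega
  -- frequency intervals as dyadic intervals
  have hyPj : y ∈ Dy P.k (4*P.l + cj) := hyP
  have hyP'j : y ∈ Dy P'.k (4*P'.l + cj) := hyP'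
  have hyq' : y ∈ Dy (P'.k + 2) P'.l := Dy_subtile hcj0 hcj3 hyP'j
  -- quartile frequency interval of P' sits inside ω_{P_j}
  have hsub1 : Dy (P'.k + 2) P'.l ⊆ Dy P.k (4*P.l + cj) :=
    Dy_subset hk2 ⟨y, hyq', hyPj⟩
  -- tops
  have hle : Tile.le (P.tile i) ((top m).tile i) := htree m P hP
  have hle' : Tile.le (P'.tile i) ((top m').tile i) := htree m' P' hP'
  -- ξ of top m lies in ω_{P_i}
  have hxi1 : Tile.ξ ((top m).tile i) ∈ Dy P.k (4*P.l + ci) :=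
    Tile.le_freq hle (Tile.xi_mem_freq _)
  -- ξ of top m' lies in ω_{P'_i} ⊆ quartile freq of P' ⊆ ω_{P_j}
  have hxi2' : Tile.ξ ((top m').tile i) ∈ Dy P'.k (4*P'.l + ci) :=
    Tile.le_freq hle' (Tile.xi_mem_freq _)
  have hxi2 : Tile.ξ ((top m').tile i) ∈ Dy P.k (4*P.l + cj) :=
    hsub1 (Dy_subtile hci0 hci3 hxi2')
  -- strict comparison of ξ's
  have hxilt : Tile.ξ ((top m).tile i) < Tile.ξ ((top m').tile i) := by
    have h1 := hxi1.2
    have h2 := hxi2.1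
    have hkpos : (0:ℝ) < (2:ℝ)^P.k := by positivity
    have : (2:ℝ)^P.k * (((4*P.l + ci : ℤ) : ℝ) + 1) ≤
        (2:ℝ)^P.k * ((4*P.l + cj : ℤ) : ℝ) := by
      gcongr
      push_cast
      have : ((ci:ℝ)) + 1 ≤ (cj:ℝ) := by exact_mod_cast hcicj
      linarith
    calc Tile.ξ ((top m).tile i) < (2:ℝ)^P.k * (((4*P.l + ci : ℤ) : ℝ) + 1) := h1
      _ ≤ (2:ℝ)^P.k * ((4*P.l + cj : ℤ) : ℝ) := this
      _ ≤ Tile.ξ ((top m').tile i) := h2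
  -- greedy order forces m' < m
  have hm'm : m' < m := by
    have hle'' : m' ≤ m := hgreedy m' m hxilt
    rcases lt_or_eq_of_le hle'' with h | h
    · exact h
    · rw [h] at hxilt; exact absurd hxilt (lt_irrefl _)
  -- now build Tile.lt (P.tile j) ((top m').tile j), contradicting hremove
  apply hremove m' m hm'm P hP
  constructor
  · -- I_P ⊊ I_{top m'}
    have h1 : Dy (-P.k) P.n ⊂ Dy (-P'.k) P'.n :=
      Dy_ssubset (by omega) ⟨x, hxP, hxP'⟩
    have h2 : P'.I ⊆ ((top m').tile i).I := Tile.le_I hle'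
    exact lt_of_lt_of_le h1 h2
  · -- ω_{(top m')_j} ⊆ ω_{P_j}
    have htk : (top m').k ≤ P'.k := Tile.le_k hle'
    have hxiq : Tile.ξ ((top m').tile i) ∈ Dy ((top m').k + 2) (top m').l :=
      Dy_subtile hci0 hci3 (Tile.xi_mem_freq ((top m').tile i))
    have hxiq' : Tile.ξ ((top m').tile i) ∈ Dy (P'.k + 2) P'.l :=
      Dy_subtile hci0 hci3 hxi2'
    have hsub2 : Dy ((top m').k + 2) (top m').l ⊆ Dy (P'.k + 2) P'.l :=
      Dy_subset (by omega) ⟨_, hxiq, hxiq'⟩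
    intro z hz
    exact hsub1 (hsub2 (Dy_subtile hcj0 hcj3 hz))

/-- geometric disjointness in the greedy tree selection.
The trees `T 0, T 1, …` are `i`-trees with tops `top 0, top 1, …` listed in
order of selection; all time-interval lengths are even powers of `2`;
the frequency centers `ξ` of the tops are chosen greedily maximal (so a
strictly larger center means an earlier selection); and when a tree is
selected, every quartile `P'` with `P'_j < (top)_j` is removed (so no later
tree contains such a quartile).  Then the tiles
`{P_j : P ∈ T m for some m}` are pairwise disjoint. -/
theorem tree_selection_disjoint (i j : ℕ)
    (hi : i ∈ ({1,2,3} : Set ℕ)) (hj : j ∈ ({1,2,3} : Set ℕ)) (hij : i < j)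
    (N : ℕ) (top : Fin N → Quartile) (T : Fin N → Finset Quartile)
    (heven : ∀ m, ∀ P ∈ T m, Even P.k)
    (heventop : ∀ m, Even (top m).k)
    (htree : ∀ m, IsTree i (top m) (T m))
    (hgreedy : ∀ m m' : Fin N,
      Tile.ξ ((top m').tile i) < Tile.ξ ((top m).tile i) → m ≤ m')
    (hremove : ∀ m m' : Fin N, m < m' → ∀ P' ∈ T m',
      ¬ Tile.lt (P'.tile j) ((top m).tile j)) :
    ∀ m m' : Fin N, ∀ P ∈ T m, ∀ P' ∈ T m', P.tile j ≠ P'.tile j →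
      Disjoint ((P.tile j).area) ((P'.tile j).area) := by
  intro m m' P hP P' hP' hne
  by_contra hdis
  obtain ⟨⟨x, y⟩, hq1, hq2⟩ := Set.not_disjoint_iff.mp hdis
  obtain ⟨hx1, hy1⟩ := hq1
  obtain ⟨hx2, hy2⟩ := hq2
  have hi1 : 1 ≤ i := by simp at hi; omega
  have hj3 : j ≤ 3 := by simp at hj; omega
  rcases lt_trichotomy P.k P'.k with hk | hk | hk
  · exact tree_selection_key i j hi1 hj3 hij N top T heven htree hgreedy hremove
      m' m P' P hP' hP hk x y hx2 hx1 hy2 hy1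
  · -- equal scales: intersecting congruent tiles are equal
    apply hne
    have hI : Dy (-P.k) P.n = Dy (-P'.k) P'.n :=
      Set.Subset.antisymm (Dy_subset (by omega) ⟨x, hx1, hx2⟩)
        (Dy_subset (by omega) ⟨x, hx2, hx1⟩)
    have hF : Dy P.k (4*P.l + ((j-1:ℕ):ℤ)) = Dy P'.k (4*P'.l + ((j-1:ℕ):ℤ)) :=
      Set.Subset.antisymm (Dy_subset (by omega) ⟨y, hy1, hy2⟩)
        (Dy_subset (by omega) ⟨y, hy2, hy1⟩)
    have hn : P.n = P'.n := (Dy_eq_k hI).2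
    have hl : P.l = P'.l := by have := (Dy_eq_k hF).2; omega
    simp [Quartile.tile, hk, hn, hl]
  · exact tree_selection_key i j hi1 hj3 hij N top T heven htree hgreedy hremove
      m m' P P' hP hP' hk x y hx1 hx2 hy1 hy2
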